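/- Let (X⁺, T) be a topologically transitive locally compact one-sided countable Markov shift and φ a continuous potential. Let λ > 0 and let μ be a non-zero Radon measure with L_φ* μ = λ μ. Then μ([a]) > 0 for every state a ∈ S, where [a] = {x : x₀ = a}. -/

import Mathlib

open MeasureTheory ENNReal

variable {S : Type*}

/-- The one-sided topological Markov shift over alphabet `S` with transition relation `Adj`. -/
abbrev MShift (Adj : S → S → Prop) : Type _ :=
  {x : ℕ → S // ∀ i, Adj (x i) (x (i + 1))}

/-- The left shift map. -/
def shiftMap (Adj : S → S → Prop) (x : MShift Adj) : MShift Adj :=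
  ⟨fun i => x.1 (i + 1), fun i => x.2 (i + 1)⟩

/-- The Ruelle (transfer) operator on non-negative functions. -/
noncomputable def Ruelle (Adj : S → S → Prop) (φ : MShift Adj → ℝ)
    (f : MShift Adj → ℝ≥0∞) (x : MShift Adj) : ℝ≥0∞ :=
  ∑' y : {y : MShift Adj // shiftMap Adj y = x}, ENNReal.ofReal (Real.exp (φ y.1)) * f y.1

/-- The cylinder set `[a] = {x : x₀ = a}`. -/
def cylA (Adj : S → S → Prop) (a : S) : Set (MShift Adj) := {x | x.1 0 = a}

/-- Topological transitivity: every state can be reached from every state. -/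
def TransitiveShift (Adj : S → S → Prop) : Prop :=
  ∀ a b : S, ∃ (n : ℕ) (x : MShift Adj), x.1 0 = a ∧ ((shiftMap Adj)^[n] x).1 0 = b

/-- Local compactness: each state has finitely many followers. -/
def LocFin (Adj : S → S → Prop) : Prop := ∀ a : S, {b : S | Adj a b}.Finite

section Helpers

variable [Countable S] [MeasurableSpace S] [MeasurableSingletonClass S]
  [TopologicalSpace S] [DiscreteTopology S] {Adj : S → S → Prop}

lemma mshift_coord_measurable (i : ℕ) : Measurable fun y : MShift Adj => y.1 i :=
  (measurable_pi_apply i).comp measurable_subtype_coe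

lemma mshift_borelS : BorelSpace S := by
  constructor
  ext s
  exact iff_of_true (Set.to_countable s).measurableSet
    (MeasurableSpace.measurableSet_generateFrom (isOpen_discrete s))

lemma mshift_borel : BorelSpace (MShift Adj) := by
  haveI : BorelSpace S := mshift_borelS
  exact Subtype.borelSpace {x : ℕ → S | ∀ i, Adj (x i) (x (i + 1))}

lemma meas_coord_eq (i : ℕ) (s : S) : MeasurableSet {y : MShift Adj | y.1 i = s} :=
  (mshift_coord_measurable i) (measurableSet_singleton s)

lemma shiftMap_measurable : Measurable (shiftMap Adj) := by
  apply Measurable.subtype_mk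
  exact measurable_pi_lambda _ fun i => mshift_coord_measurable (i + 1)

open Classical in
/-- Prepend `s` to `z` when admissible, otherwise return `z`. -/
noncomputable def extM (s : S) (z : MShift Adj) : MShift Adj :=
  ⟨fun i => if Adj s (z.1 0) then (Nat.casesOn i s fun j => z.1 j) else z.1 i, by
    intro i
    by_cases h : Adj s (z.1 0)
    · simp only [h, if_true]
      cases i with
      | zero => exact h
      | succ j => exact z.2 j
    · simp only [h, if_false]
      exact z.2 i⟩

lemma extM_coord0 {s : S} {z : MShift Adj} (h : Adj s (z.1 0)) : (extM s z).1 0 = s := by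
  simp [extM, h]

lemma shiftMap_extM {s : S} {z : MShift Adj} (h : Adj s (z.1 0)) :
    shiftMap Adj (extM s z) = z := by
  apply Subtype.ext
  funext i
  simp [shiftMap, extM, h]

lemma extM_measurable (s : S) : Measurable (extM (Adj := Adj) s) := by
  apply Measurable.subtype_mk
  apply measurable_pi_lambda
  intro i
  have hA : MeasurableSet {z : MShift Adj | Adj s (z.1 0)} := by
    have : {z : MShift Adj | Adj s (z.1 0)} = (fun z : MShift Adj => z.1 0) ⁻¹' {t | Adj s t} := rfl
    rw [this]
    exact (mshift_coord_measurable 0) (Set.to_countable _).measurableSet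
  cases i with
  | zero => exact Measurable.ite hA measurable_const (mshift_coord_measurable 0)
  | succ j => exact Measurable.ite hA (mshift_coord_measurable j) (mshift_coord_measurable (j + 1))

lemma iterate_coord (n : ℕ) (x : MShift Adj) (i : ℕ) :
    ((shiftMap Adj)^[n] x).1 i = x.1 (i + n) := by
  induction n generalizing x with
  | zero => rfl
  | succ n ih =>
    rw [Function.iterate_succ_apply, ih (shiftMap Adj x)]
    show x.1 (i + n + 1) = x.1 (i + (n + 1))
    rw [Nat.add_assoc]

lemma step_lemma (Adj : S → S → Prop) (φ : MShift Adj → ℝ) (hφ : Continuous φ)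
    (lam : ℝ) (hlam : 0 < lam) (μ : Measure (MShift Adj))
    (hconf : ∀ f : MShift Adj → ℝ≥0∞, Measurable f →
      ∫⁻ x, Ruelle Adj φ f x ∂μ = ENNReal.ofReal lam * ∫⁻ x, f x ∂μ)
    (s t : S) (hst : Adj s t) (C : Set (MShift Adj)) (hCm : MeasurableSet C)
    (hC0 : ∀ z ∈ C, z.1 0 = t) (hμC : 0 < μ C) :
    0 < μ {y : MShift Adj | y.1 0 = s ∧ shiftMap Adj y ∈ C} := by
  haveI : BorelSpace (MShift Adj) := mshift_borel
  set C' : Set (MShift Adj) := {y | y.1 0 = s ∧ shiftMap Adj y ∈ C} with hC'def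
  have hC' : MeasurableSet C' := by
    have : C' = {y : MShift Adj | y.1 0 = s} ∩ shiftMap Adj ⁻¹' C := rfl
    rw [this]
    exact (meas_coord_eq 0 s).inter (shiftMap_measurable hCm)
  set f : MShift Adj → ℝ≥0∞ := C'.indicator fun _ => 1 with hfdef
  have hf : Measurable f := measurable_const.indicator hC'
  have h1 : ∫⁻ x, f x ∂μ = μ C' := lintegral_indicator_one hC'
  have h2 := hconf f hf
  have key : ∀ z ∈ C, ENNReal.ofReal (Real.exp (φ (extM s z))) ≤ Ruelle Adj φ f z := by
    intro z hz
    have hadj : Adj s (z.1 0) := by rw [hC0 z hz]; exact hst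
    have hsh : shiftMap Adj (extM s z) = z := shiftMap_extM hadj
    have hmem : extM s z ∈ C' := by
      rw [hC'def]
      exact ⟨extM_coord0 hadj, by rw [hsh]; exact hz⟩
    have hfe : f (extM s z) = 1 := Set.indicator_of_mem hmem _
    calc ENNReal.ofReal (Real.exp (φ (extM s z)))
        = ENNReal.ofReal (Real.exp (φ (extM s z))) * f (extM s z) := by rw [hfe, mul_one]
      _ ≤ Ruelle Adj φ f z := ENNReal.le_tsum (⟨extM s z, hsh⟩ : {y : MShift Adj // shiftMap Adj y = z})
  set g : MShift Adj → ℝ≥0∞ :=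
    C.indicator fun z => ENNReal.ofReal (Real.exp (φ (extM s z))) with hgdef
  have hg : Measurable g :=
    (ENNReal.measurable_ofReal.comp
      (Real.measurable_exp.comp (hφ.measurable.comp (extM_measurable s)))).indicator hCm
  have hgle : g ≤ Ruelle Adj φ f := by
    intro z
    by_cases hz : z ∈ C
    · rw [hgdef, Set.indicator_of_mem hz]
      exact key z hz
    · rw [hgdef, Set.indicator_of_notMem hz]
      exact zero_le
  have hpos : 0 < ∫⁻ z, g z ∂μ := by
    rw [lintegral_pos_iff_support hg]
    refine lt_of_lt_of_le hμC (measure_mono ?_)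
    intro z hz
    rw [Function.mem_support, hgdef, Set.indicator_of_mem hz]
    simp [Real.exp_pos]
  have hfin : 0 < ∫⁻ z, Ruelle Adj φ f z ∂μ := lt_of_lt_of_le hpos (lintegral_mono hgle)
  rw [h2, h1] at hfin
  by_contra h
  push_neg at h
  have hz : μ C' = 0 := le_antisymm h zero_le
  rw [hz, mul_zero] at hfin
  exact lt_irrefl _ hfin

end Helpers

/-- Every non-zero `λ`-conformal Radon measure gives positive mass to every cylinder `[a]`. -/
theorem conformal_pos_on_cylinders [Countable S] [MeasurableSpace S]
    [MeasurableSingletonClass S] [TopologicalSpace S] [DiscreteTopology S]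
    (Adj : S → S → Prop) (htrans : TransitiveShift Adj) (hloc : LocFin Adj)
    (φ : MShift Adj → ℝ) (hφ : Continuous φ) (lam : ℝ) (hlam : 0 < lam)
    (μ : Measure (MShift Adj)) (hμ : μ ≠ 0)
    (hRadon : ∀ K : Set (MShift Adj), IsCompact K → μ K ≠ ⊤)
    (hconf : ∀ f : MShift Adj → ℝ≥0∞, Measurable f →
      ∫⁻ x, Ruelle Adj φ f x ∂μ = ENNReal.ofReal lam * ∫⁻ x, f x ∂μ) :
    ∀ a : S, 0 < μ (cylA Adj a) := by
  haveI : BorelSpace (MShift Adj) := mshift_borel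
  intro a
  have hb : ∃ b : S, 0 < μ (cylA Adj b) := by
    by_contra h
    push_neg at h
    apply hμ
    have huniv : (Set.univ : Set (MShift Adj)) = ⋃ b : S, cylA Adj b := by
      ext x
      simp only [Set.mem_univ, Set.mem_iUnion, true_iff]
      exact ⟨x.1 0, rfl⟩
    have : μ Set.univ = 0 := by
      rw [huniv]
      exact measure_iUnion_null fun b => le_antisymm (h b) zero_le
    exact Measure.measure_univ_eq_zero.mp this
  obtain ⟨b, hbpos⟩ := hb
  obtain ⟨n, x, hx0, hxn⟩ := htrans a b
  have hxn' : x.1 n = b := by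
    rw [iterate_coord] at hxn
    simpa using hxn
  have main : ∀ k, k ≤ n → 0 < μ {y : MShift Adj | ∀ i ≤ k, y.1 i = x.1 (n - k + i)} := by
    intro k
    induction k with
    | zero =>
      intro _
      have hset : {y : MShift Adj | ∀ i ≤ 0, y.1 i = x.1 (n - 0 + i)} = cylA Adj b := by
        ext y
        simp only [Set.mem_setOf_eq, cylA, Nat.le_zero]
        constructor
        · intro h
          have := h 0 rfl
          simpa [hxn'] using this
        · intro h i hi
          subst hi
          simpa [hxn'] using h
      rw [hset]
      exact hbpos
    | succ k ih =>
      intro hk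
      have hk' : k ≤ n := Nat.le_of_succ_le hk
      have hC := ih hk'
      set C : Set (MShift Adj) := {y | ∀ i ≤ k, y.1 i = x.1 (n - k + i)} with hCdef
      have hCm : MeasurableSet C := by
        have : C = ⋂ i, ⋂ (_ : i ≤ k), {y : MShift Adj | y.1 i = x.1 (n - k + i)} := by
          ext y
          simp [hCdef, Set.mem_iInter]
        rw [this]
        exact MeasurableSet.iInter fun i => MeasurableSet.iInter fun _ => meas_coord_eq _ _
      have heq : n - (k + 1) + 1 = n - k := by omega
      have hst : Adj (x.1 (n - (k + 1))) (x.1 (n - k)) := by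
        have h2 := x.2 (n - (k + 1))
        rwa [heq] at h2
      have hC0 : ∀ z ∈ C, z.1 0 = x.1 (n - k) := by
        intro z hz
        have := hz 0 (Nat.zero_le k)
        simpa using this
      have hstep := step_lemma Adj φ hφ lam hlam μ hconf _ _ hst C hCm hC0 hC
      have hset : {y : MShift Adj | ∀ i ≤ k + 1, y.1 i = x.1 (n - (k + 1) + i)}
          = {y : MShift Adj | y.1 0 = x.1 (n - (k + 1)) ∧ shiftMap Adj y ∈ C} := by
        ext y
        simp only [Set.mem_setOf_eq, hCdef]
        constructor
        · intro h
          refine ⟨by simpa using h 0 (Nat.zero_le _), ?_⟩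
          intro i hi
          have h2 := h (i + 1) (Nat.succ_le_succ hi)
          have harith : n - (k + 1) + (i + 1) = n - k + i := by omega
          rw [harith] at h2
          exact h2
        · rintro ⟨h0, hs⟩ i hi
          cases i with
          | zero => simpa using h0
          | succ j =>
            have h2 := hs j (Nat.le_of_succ_le_succ hi)
            have harith : n - (k + 1) + (j + 1) = n - k + j := by omega
            rw [harith]
            exact h2
      rw [hset]
      exact hstep
  have hfin := main n le_rfl
  refine lt_of_lt_of_le hfin (measure_mono ?_)
  intro y hy
  have := hy 0 (Nat.zero_le n)
  simp only [Nat.sub_self, Nat.zero_add, Nat.add_zero] at this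
  show y.1 0 = a
  rw [this, hx0]
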